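/- Let q be a prime power, θ a primitive element of F_q, m > 1 a divisor of q−1, and π a (q−1,m)-piecewise affine permutation with parameters (a, b, c). Then the map F : F_q → F_q defined by F(0) = 0 and F(θ^i) = θ^{π(i)} for i ∈ [1,q−1] is a bijection of F_q and agrees with the polynomial (1/m)·∑_{i=1}^{m} θ^{b_i}·x^{a_i}·E_m(x·θ^{−c_i}), where E_m(x) = ∑_{j=0}^{m−1} x^{(q−1)j/m}. -/

import Mathlib

/-- `psi k x` is the representative of `x` mod `k` in `[1, k]`. -/
def psi (k x : ℕ) : ℕ := if x % k = 0 then k else x % k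

/-- `π` is an `(n,m)`-piecewise affine permutation of `[1,n]` with parameters
`(a, b, c)`: it permutes `[1,n]` (and is the identity elsewhere), the entries of
`a, b` lie in `[1,n]`, the entries of `c` form a permutation of `[1,m]`, and for
`x ∈ [1,n]` with `Ψ_m(x) = c_i` one has `π(x) = Ψ_n(a_i x + b_i)` and
`Ψ_m(π(x)) = c_{i+1}`, indices cyclic modulo `m`. -/
def IsPAP (n m : ℕ) [NeZero m] (a b c : Fin m → ℕ) (π : ℕ → ℕ) : Prop :=
  Set.BijOn π (Set.Icc 1 n) (Set.Icc 1 n) ∧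
  (∀ x : ℕ, x ∉ Set.Icc 1 n → π x = x) ∧
  (∀ i, a i ∈ Set.Icc 1 n) ∧ (∀ i, b i ∈ Set.Icc 1 n) ∧
  (∀ i, c i ∈ Set.Icc 1 m) ∧ Function.Injective c ∧
  ∀ x ∈ Set.Icc 1 n, ∀ i, psi m x = c i →
    π x = psi n (a i * x + b i) ∧ psi m (π x) = c (i + 1)

/-- The `θ`-lift of a `(q-1,m)`-p.a.p. `π` (sending `0 ↦ 0` and `θ^i ↦ θ^{π(i)}`)
is a bijection of `F_q` that agrees with the polynomial
`(1/m)·∑_{i=1}^m θ^{b_i} x^{a_i} E_m(x θ^{-c_i})`. -/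
theorem pap_lift_polynomial (q : ℕ) (hq : ∃ p k : ℕ, p.Prime ∧ 0 < k ∧ q = p ^ k)
    (F : Type) [Field F] [Fintype F] (hF : Fintype.card F = q)
    (θ : F) (hθ : orderOf θ = q - 1)
    (m : ℕ) [NeZero m] (hm : 1 < m) (hmq : m ∣ q - 1)
    (a b c : Fin m → ℕ) (π : ℕ → ℕ) (hpap : IsPAP (q - 1) m a b c π)
    (Fmap : F → F) (hF0 : Fmap 0 = 0)
    (hFθ : ∀ i ∈ Set.Icc 1 (q - 1), Fmap (θ ^ i) = θ ^ (π i)) :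
    Function.Bijective Fmap ∧
    ∀ x : F, Fmap x =
      (m : F)⁻¹ * ∑ i : Fin m, θ ^ (b i) * x ^ (a i) *
        ∑ t ∈ Finset.range m, (x * (θ ^ (c i))⁻¹) ^ ((q - 1) / m * t) := by
  classical
  obtain ⟨hbij, hout, ha, hb, hc, hcinj, hstep⟩ := hpap
  have hq2 : 2 ≤ q := by
    obtain ⟨p, k, hp, hk, rfl⟩ := hq
    have h2p := hp.two_le
    calc 2 ≤ p := h2p
    _ = p ^ 1 := (pow_one p).symm
    _ ≤ p ^ k := Nat.pow_le_pow_right (by omega) hk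
  set n := q - 1 with hn
  have hmn : m ≤ n := Nat.le_of_dvd (by omega) hmq
  have hn2 : 2 ≤ n := le_trans hm hmn
  obtain ⟨d', hd'⟩ := hmq
  have hd'pos : 0 < d' := by
    rcases Nat.eq_zero_or_pos d' with h | h
    · rw [h, mul_zero] at hd'; omega
    · exact h
  have hθ1 : θ ^ n = 1 := by rw [← hθ]; exact pow_orderOf_eq_one θ
  have hθ0 : θ ≠ 0 := by
    intro h
    rw [h, zero_pow (by omega)] at hθ1
    exact one_ne_zero hθ1.symm
  -- Lemma A: θ ^ psi n y = θ ^ y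
  have hpsiA : ∀ y, θ ^ psi n y = θ ^ y := by
    intro y
    have h1 : θ ^ (y % n) = θ ^ y := by rw [← hθ]; exact pow_mod_orderOf θ y
    unfold psi
    split_ifs with h
    · rw [hθ1, ← h1, h, pow_zero]
    · exact h1
  -- Lemma B: powers with exponents in [1,n] are injective
  have hinjB : ∀ i ∈ Set.Icc 1 n, ∀ j ∈ Set.Icc 1 n, θ ^ i = θ ^ j → i = j := by
    intro i hi j hj hij
    simp only [Set.mem_Icc] at hi hj
    wlog hle : i ≤ j generalizing i j
    · exact (this j i hij.symm hj hi (by omega)).symm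
    have h1 : θ ^ i * θ ^ (j - i) = θ ^ i * 1 := by
      rw [mul_one, ← pow_add, Nat.add_sub_cancel' hle, hij]
    have h2 : θ ^ (j - i) = 1 := mul_left_cancel₀ (pow_ne_zero _ hθ0) h1
    have h3 : n ∣ j - i := hθ ▸ orderOf_dvd_iff_pow_eq_one.2 h2
    have h4 := Nat.eq_zero_of_dvd_of_lt h3
    omega
  -- Lemma C: every nonzero element is θ ^ s for s ∈ [1,n]
  have hsurj : ∀ x : F, x ≠ 0 → ∃ s ∈ Set.Icc 1 n, x = θ ^ s := by
    intro x hx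
    set S : Finset F := (Finset.Icc 1 n).image (θ ^ ·) with hSdef
    have hScard : S.card = n := by
      rw [Finset.card_image_of_injOn, Nat.card_Icc]
      · omega
      · intro i hi j hj
        exact hinjB i (by simpa using hi) j (by simpa using hj)
    have hSsub : S ⊆ Finset.univ.erase 0 := by
      intro y hy
      simp only [hSdef, Finset.mem_image] at hy
      obtain ⟨i, _, rfl⟩ := hy
      exact Finset.mem_erase.2 ⟨pow_ne_zero _ hθ0, Finset.mem_univ _⟩
    have hcard2 : (Finset.univ.erase (0 : F)).card = n := by
      rw [Finset.card_erase_of_mem (Finset.mem_univ _), Finset.card_univ, hF]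
    have hSeq : S = Finset.univ.erase 0 :=
      Finset.eq_of_subset_of_card_le hSsub (by rw [hScard, hcard2])
    have hxS : x ∈ S := hSeq ▸ Finset.mem_erase.2 ⟨hx, Finset.mem_univ x⟩
    simp only [hSdef, Finset.mem_image, Finset.mem_Icc] at hxS
    obtain ⟨s, hs, h⟩ := hxS
    exact ⟨s, Set.mem_Icc.2 hs, h.symm⟩
  -- injectivity of Fmap
  have hinj : Function.Injective Fmap := by
    intro x y hxy
    by_cases hx : x = 0 <;> by_cases hy : y = 0
    · rw [hx, hy]
    · exfalso
      obtain ⟨s, hs, rfl⟩ := hsurj y hy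
      rw [hx, hF0, hFθ s hs] at hxy
      exact pow_ne_zero _ hθ0 hxy.symm
    · exfalso
      obtain ⟨s, hs, rfl⟩ := hsurj x hx
      rw [hy, hF0, hFθ s hs] at hxy
      exact pow_ne_zero _ hθ0 hxy
    · obtain ⟨s, hs, rfl⟩ := hsurj x hx
      obtain ⟨t, ht, rfl⟩ := hsurj y hy
      rw [hFθ s hs, hFθ t ht] at hxy
      have h := hinjB _ (hbij.mapsTo hs) _ (hbij.mapsTo ht) hxy
      rw [hbij.injOn hs ht h]
  -- (m : F) ≠ 0
  have hm0 : (m : F) ≠ 0 := by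
    obtain ⟨p', hcp⟩ := CharP.exists F
    haveI := hcp
    obtain ⟨nn, hp', hcard⟩ := FiniteField.card F p'
    intro h
    have hdvd : p' ∣ m := (CharP.cast_eq_zero_iff F p' m).1 h
    have h1 : p' ∣ n := hdvd.trans ⟨d', hd'⟩
    have h2 : p' ∣ q := by
      rw [← hF, hcard]
      exact dvd_pow_self p' (by positivity)
    have h3 : p' ∣ q - n := Nat.dvd_sub h2 h1
    have h4 : q - n = 1 := by omega
    rw [h4] at h3
    have := Nat.le_of_dvd one_pos h3
    have := hp'.two_le
    omega
  -- surjectivity of c onto [1,m]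
  have hcsurj : ∀ y ∈ Set.Icc 1 m, ∃ i, c i = y := by
    intro y hy
    have himg : Finset.univ.image c = Finset.Icc 1 m := by
      apply Finset.eq_of_subset_of_card_le
      · intro z hz
        simp only [Finset.mem_image, Finset.mem_univ, true_and] at hz
        obtain ⟨i, rfl⟩ := hz
        simpa [Finset.mem_Icc] using Set.mem_Icc.1 (hc i)
      · rw [Nat.card_Icc, Finset.card_image_of_injective _ hcinj, Finset.card_univ,
          Fintype.card_fin]
        omega
    have hmem : y ∈ Finset.univ.image c := by
      rw [himg]
      simpa [Finset.mem_Icc] using Set.mem_Icc.1 hy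
    simpa using hmem
  -- psi-mod bridge
  have hpsic : ∀ s : ℕ, ∀ i : Fin m, (psi m s = c i ↔ s % m = c i % m) := by
    intro s i
    obtain ⟨h1, h2⟩ := Set.mem_Icc.1 (hc i)
    have hsm : s % m < m := Nat.mod_lt _ (by omega)
    unfold psi
    rcases eq_or_lt_of_le h2 with h | h
    · rw [h, Nat.mod_self]
      split_ifs with h0 <;> omega
    · rw [Nat.mod_eq_of_lt h]
      split_ifs with h0 <;> omega
  refine ⟨(Finite.injective_iff_bijective).1 hinj, ?_⟩
  intro x
  by_cases hx : x = 0
  · subst hx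
    rw [hF0, Finset.sum_eq_zero, mul_zero]
    intro i _
    rw [zero_pow (by have := (Set.mem_Icc.1 (ha i)).1; omega), mul_zero, zero_mul]
  · obtain ⟨s, hs, rfl⟩ := hsurj x hx
    have hpsimem : psi m s ∈ Set.Icc 1 m := by
      have hsm : s % m < m := Nat.mod_lt _ (by omega)
      unfold psi
      split_ifs with h <;> simp [Set.mem_Icc] <;> omega
    obtain ⟨i₀, hi₀⟩ := hcsurj (psi m s) hpsimem
    rw [hFθ s hs, (hstep s hs i₀ hi₀.symm).1, hpsiA]
    -- inverse fact
    have hinv : ∀ i : Fin m, (θ ^ c i)⁻¹ = θ ^ (n - c i) := by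
      intro i
      have hci : c i ≤ n := le_trans (Set.mem_Icc.1 (hc i)).2 hmn
      exact inv_eq_of_mul_eq_one_right (by rw [← pow_add, Nat.add_sub_cancel' hci, hθ1])
    -- the inner geometric sums
    have hS : ∀ i : Fin m,
        (∑ t ∈ Finset.range m, (θ ^ s * (θ ^ c i)⁻¹) ^ (n / m * t)) =
          if c i = psi m s then (m : F) else 0 := by
      intro i
      obtain ⟨hci1, hcim⟩ := Set.mem_Icc.1 (hc i)
      have hcin : c i ≤ n := le_trans hcim hmn
      set e := s + (n - c i) with he
      have hrw : ∀ t, (θ ^ s * (θ ^ c i)⁻¹) ^ (n / m * t) = (θ ^ (e * (n / m))) ^ t := by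
        intro t
        rw [hinv i, ← pow_add, ← pow_mul, ← pow_mul, ← mul_assoc]
      have h1 : e + c i = s + m * d' := by omega
      have key : m ∣ e ↔ s % m = c i % m := by
        constructor
        · rintro ⟨u, hu⟩
          have h2 : s + m * d' = m * u + c i := by omega
          have h3 : (s + m * d') % m = s % m := Nat.add_mul_mod_self_left s m d'
          have h4 : (m * u + c i) % m = c i % m := by
            rw [Nat.mul_add_mod]
          rw [h2, h4] at h3
          exact h3.symm
        · intro h
          have h4 : e + c i ≡ 0 + c i [MOD m] := by
            rw [h1, Nat.zero_add]
            calc s + m * d' ≡ s [MOD m] := Nat.add_mul_mod_self_left s m d'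
              _ ≡ c i [MOD m] := h
          exact Nat.modEq_zero_iff_dvd.1 (Nat.ModEq.add_right_cancel' _ h4)
      have hcond : m ∣ e ↔ c i = psi m s := by
        rw [key, ← hpsic s i, eq_comm]
      have hnm : n / m = d' := by rw [hd']; exact Nat.mul_div_cancel_left d' (by omega)
      by_cases hcase : c i = psi m s
      · obtain ⟨u, hu⟩ := hcond.2 hcase
        have hw : θ ^ (e * (n / m)) = 1 := by
          rw [hnm, hu, show m * u * d' = n * u from by rw [hd']; ring, pow_mul, hθ1, one_pow]
        rw [Finset.sum_congr rfl (fun t _ => hrw t)]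
        simp [hw, hcase]
      · have hnd : ¬ m ∣ e := fun h => hcase (hcond.1 h)
        have hw1 : θ ^ (e * (n / m)) ≠ 1 := by
          intro h
          have h5 := orderOf_dvd_iff_pow_eq_one.2 h
          rw [hθ] at h5
          have h6 : m * d' ∣ e * d' := by rw [← hd']; rw [hnm] at h5; exact h5
          exact hnd ((Nat.mul_dvd_mul_iff_right hd'pos).1 h6)
        have hwm : (θ ^ (e * (n / m))) ^ m = 1 := by
          rw [← pow_mul, hnm, show e * d' * m = n * e from by rw [hd']; ring, pow_mul, hθ1,
            one_pow]
        rw [Finset.sum_congr rfl (fun t _ => hrw t), geom_sum_eq hw1, hwm]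
        simp [hcase]
    -- assemble the sum
    rw [Finset.sum_eq_single i₀
      (fun i _ hne => by
        rw [hS i, if_neg (fun h => hne (hcinj (h.trans hi₀.symm))), mul_zero])
      (fun h => absurd (Finset.mem_univ i₀) h)]
    rw [hS i₀, if_pos hi₀, ← pow_mul, ← pow_add]
    rw [show a i₀ * s + b i₀ = b i₀ + s * a i₀ from by ring]
    field_simp
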